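/- Let {e₁,…,eₙ} be an orthonormal basis of an n-dimensional real inner product space V (n ≥ 2), and fix distinct indices i ≠ j. Consider the operator T = (ε(eᵢ)ι(eᵢ) - ι(eᵢ)ε(eᵢ))·(ε(eⱼ)ι(eⱼ) - ι(eⱼ)ε(eⱼ)) on the degree-m part Λᵐ(V). Then trace of T on Λᵐ(V) equals C(n-2, m-2) + C(n-2, m) - 2·C(n-2, m-1), where C(a,b) denotes the binomial coefficient (with C(a,b) = 0 when b < 0 or b > a). -/

import Mathlib

open scoped RealInnerProductSpace

variable {V : Type*} [NormedAddCommGroup V] [InnerProductSpace ℝ V]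

/-- Exterior multiplication `ε(e) : ω ↦ e ∧ ω` on `Λ*(V)`. -/
noncomputable def extMul (e : V) : Module.End ℝ (ExteriorAlgebra ℝ V) :=
  LinearMap.mulLeft ℝ (ExteriorAlgebra.ι ℝ e)

/-- Interior multiplication (contraction) `ι(e)` on `Λ*(V)`. -/
noncomputable def intMul (e : V) : Module.End ℝ (ExteriorAlgebra ℝ V) :=
  CliffordAlgebra.contractLeft (Q := (0 : QuadraticForm ℝ V)) (innerₗ V e)

/-- `ε(e)ι(e) - ι(e)ε(e)` on `Λ*(V)`. -/
noncomputable def K (e : V) : Module.End ℝ (ExteriorAlgebra ℝ V) :=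
  extMul e * intMul e - intMul e * extMul e

namespace Stmt8Aux

lemma intMul_mul (e a : V) (x : ExteriorAlgebra ℝ V) :
    intMul e (ExteriorAlgebra.ι ℝ a * x)
      = (⟪e, a⟫ : ℝ) • x - ExteriorAlgebra.ι ℝ a * intMul e x := by
  apply CliffordAlgebra.contractLeft_ι_mul (Q := (0 : QuadraticForm ℝ V)) (innerₗ V e) a x

lemma intMul_one (e : V) : intMul e (1 : ExteriorAlgebra ℝ V) = 0 :=
  CliffordAlgebra.contractLeft_one (0 : QuadraticForm ℝ V) _

lemma K_apply (e : V) (he : (⟪e, e⟫ : ℝ) = 1) (x : ExteriorAlgebra ℝ V) :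
    K e x = (2:ℝ) • (ExteriorAlgebra.ι ℝ e * intMul e x) - x := by
  have h := intMul_mul e e x
  rw [he, one_smul] at h
  simp only [K, LinearMap.sub_apply, Module.End.mul_apply, extMul, LinearMap.mulLeft_apply, h,
    mul_sub]
  module

variable {n : ℕ} (e : Fin n → V)

/-- the wedge product of the basis vectors indexed by `l` -/
noncomputable def wl (l : List (Fin n)) : ExteriorAlgebra ℝ V :=
  (l.map fun k => ExteriorAlgebra.ι ℝ (e k)).prod

@[simp] lemma wl_nil : wl e ([] : List (Fin n)) = 1 := rfl

@[simp] lemma wl_cons (h : Fin n) (t : List (Fin n)) :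
    wl e (h :: t) = ExteriorAlgebra.ι ℝ (e h) * wl e t := by
  simp [wl]

variable (he : Orthonormal ℝ e)

include he in
lemma inner_ite (i k : Fin n) : (⟪e i, e k⟫ : ℝ) = if i = k then 1 else 0 :=
  orthonormal_iff_ite.mp he i k

include he in
lemma intMul_wl_of_not_mem {i : Fin n} {l : List (Fin n)} (hi : i ∉ l) :
    intMul (e i) (wl e l) = 0 := by
  induction l with
  | nil => simpa using intMul_one (e i)
  | cons h t ih =>
    have hih : i ∉ t := fun hh => hi (List.mem_cons_of_mem _ hh)
    have hne : i ≠ h := fun hh => hi (hh ▸ List.mem_cons_self)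
    rw [wl_cons, intMul_mul, inner_ite e he, if_neg hne, ih hih, zero_smul, mul_zero, sub_zero]

include he in
lemma K_comm {i h : Fin n} (hne : i ≠ h) (y : ExteriorAlgebra ℝ V) :
    K (e i) (ExteriorAlgebra.ι ℝ (e h) * y)
      = ExteriorAlgebra.ι ℝ (e h) * K (e i) y := by
  have h1 : (⟪e i, e i⟫ : ℝ) = 1 := by rw [inner_ite e he, if_pos rfl]
  rw [K_apply _ h1, K_apply _ h1, intMul_mul, inner_ite e he, if_neg hne, zero_smul, zero_sub,
    mul_neg]
  have hswap : ExteriorAlgebra.ι ℝ (e i) * (ExteriorAlgebra.ι ℝ (e h) * intMul (e i) y)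
      = -(ExteriorAlgebra.ι ℝ (e h) * (ExteriorAlgebra.ι ℝ (e i) * intMul (e i) y)) := by
    rw [← mul_assoc, ← mul_assoc, ← neg_mul]
    congr 1
    exact eq_neg_of_add_eq_zero_left (ExteriorAlgebra.ι_add_mul_swap (e i) (e h))
  rw [hswap]
  rw [mul_sub, mul_smul_comm]
  module

include he in
lemma K_head (i : Fin n) (y : ExteriorAlgebra ℝ V) :
    K (e i) (ExteriorAlgebra.ι ℝ (e i) * y) = ExteriorAlgebra.ι ℝ (e i) * y := by
  have h1 : (⟪e i, e i⟫ : ℝ) = 1 := by rw [inner_ite e he, if_pos rfl]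
  rw [K_apply _ h1, intMul_mul, inner_ite e he, if_pos rfl, one_smul, mul_sub,
    ← mul_assoc, ExteriorAlgebra.ι_sq_zero, zero_mul, sub_zero]
  module

include he in
lemma K_wl {l : List (Fin n)} (hl : l.Nodup) (i : Fin n) :
    K (e i) (wl e l) = (if i ∈ l then (1:ℝ) else -1) • wl e l := by
  induction l with
  | nil =>
    have h1 : (⟪e i, e i⟫ : ℝ) = 1 := by rw [inner_ite e he, if_pos rfl]
    rw [wl_nil, K_apply _ h1, intMul_one, mul_zero, smul_zero, zero_sub,
      if_neg List.not_mem_nil, neg_smul, one_smul]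
  | cons h t ih =>
    have ht : t.Nodup := (List.nodup_cons.mp hl).2
    by_cases hih : i = h
    · subst hih
      rw [wl_cons, K_head e he, if_pos List.mem_cons_self, one_smul]
    · rw [wl_cons, K_comm e he hih, ih ht, mul_smul_comm]
      have : (i ∈ h :: t) ↔ i ∈ t := by
        constructor
        · intro hh; rcases List.mem_cons.mp hh with h' | h'
          · exact absurd h' hih
          · exact h'
        · exact fun hh => List.mem_cons_of_mem _ hh
      rw [← wl_cons]
      by_cases hm : i ∈ t
      · rw [if_pos hm, if_pos (this.mpr hm)]
      · rw [if_neg hm, if_neg (fun hh => hm (this.mp hh))]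


/-- iterated contraction, first element contracts first -/
noncomputable def Dl : List (Fin n) → Module.End ℝ (ExteriorAlgebra ℝ V)
  | [] => 1
  | h :: t => Dl t * intMul (e h)

@[simp] lemma Dl_nil (x : ExteriorAlgebra ℝ V) : Dl e [] x = x := rfl

@[simp] lemma Dl_cons (h : Fin n) (t : List (Fin n)) (x : ExteriorAlgebra ℝ V) :
    Dl e (h :: t) x = Dl e t (intMul (e h) x) := rfl

include he in
lemma Dl_wl_self {l : List (Fin n)} (hl : l.Nodup) : Dl e l (wl e l) = 1 := by
  induction l with
  | nil => rfl
  | cons h t ih =>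
    have hht : h ∉ t := (List.nodup_cons.mp hl).1
    have ht : t.Nodup := (List.nodup_cons.mp hl).2
    rw [wl_cons, Dl_cons, intMul_mul, inner_ite e he, if_pos rfl, one_smul,
      intMul_wl_of_not_mem e he hht, mul_zero, sub_zero, ih ht]

include he in
lemma intMul_wl_erase {i : Fin n} {l : List (Fin n)} (hl : l.Nodup) (hi : i ∈ l) :
    ∃ c : ℝ, intMul (e i) (wl e l) = c • wl e (l.erase i) := by
  induction l with
  | nil => exact absurd hi List.not_mem_nil
  | cons h t ih =>
    have ht : t.Nodup := (List.nodup_cons.mp hl).2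
    by_cases hih : i = h
    · subst hih
      refine ⟨1, ?_⟩
      rw [wl_cons, intMul_mul, inner_ite e he, if_pos rfl, one_smul,
        intMul_wl_of_not_mem e he (List.nodup_cons.mp hl).1, mul_zero, sub_zero,
        List.erase_cons_head, one_smul]
    · have hit : i ∈ t := by
        rcases List.mem_cons.mp hi with h' | h'
        · exact absurd h' hih
        · exact h'
      obtain ⟨c, hc⟩ := ih ht hit
      refine ⟨-c, ?_⟩
      rw [wl_cons, intMul_mul, inner_ite e he, if_neg hih, zero_smul, zero_sub, hc,
        List.erase_cons_tail (by simpa using fun hh => hih hh.symm), wl_cons, mul_smul_comm,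
        neg_smul]

include he in
lemma Dl_wl_ne : ∀ (s t : List (Fin n)), s.Nodup → t.Nodup → s.length = t.length →
    s.toFinset ≠ t.toFinset → Dl e s (wl e t) = 0 := by
  intro s
  induction s with
  | nil =>
    intro t _ _ hlen hne
    obtain rfl : t = [] := List.length_eq_zero_iff.mp hlen.symm
    simp at hne
  | cons a s' ih =>
    intro t hs ht hlen hne
    have hs' : s'.Nodup := (List.nodup_cons.mp hs).2
    by_cases hat : a ∈ t
    · obtain ⟨c, hc⟩ := intMul_wl_erase e he ht hat
      rw [Dl_cons, hc, map_smul]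
      have herase_nd : (t.erase a).Nodup := ht.erase a
      have hlen' : s'.length = (t.erase a).length := by
        rw [List.length_erase_of_mem hat]
        simp only [List.length_cons] at hlen
        omega
      have hfin : s'.toFinset ≠ (t.erase a).toFinset := by
        intro hEq
        apply hne
        have h1 : (a :: s').toFinset = insert a s'.toFinset := by simp
        have h2 : (t.erase a).toFinset = t.toFinset.erase a := by
          ext x
          simp [ht.mem_erase_iff, and_comm]
        rw [h1, hEq, h2, Finset.insert_erase (by simpa using hat)]
      rw [ih (t.erase a) hs' herase_nd hlen' hfin, smul_zero]
    · rw [Dl_cons, intMul_wl_of_not_mem e he hat, map_zero]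

lemma wl_perm {l l' : List (Fin n)} (h : l.Perm l') : wl e l = wl e l' ∨ wl e l = -wl e l' := by
  induction h with
  | nil => exact Or.inl rfl
  | cons x _ ih =>
    rcases ih with h' | h'
    · exact Or.inl (by rw [wl_cons, wl_cons, h'])
    · exact Or.inr (by rw [wl_cons, wl_cons, h', mul_neg])
  | swap x y l =>
    refine Or.inr ?_
    rw [wl_cons, wl_cons, wl_cons, wl_cons, ← mul_assoc, ← mul_assoc,
      eq_neg_of_add_eq_zero_left (ExteriorAlgebra.ι_add_mul_swap (e y) (e x)), neg_mul]
  | trans _ _ ih1 ih2 =>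
    rcases ih1 with h1 | h1 <;> rcases ih2 with h2 | h2
    · exact Or.inl (h1.trans h2)
    · exact Or.inr (h1.trans h2)
    · exact Or.inr (by rw [h1, h2])
    · exact Or.inl (by rw [h1, h2, neg_neg])

lemma wl_eq_zero {l : List (Fin n)} (hl : ¬ l.Nodup) : wl e l = 0 := by
  induction l with
  | nil => exact absurd List.nodup_nil hl
  | cons h t ih =>
    by_cases hnt : t.Nodup
    · have hht : h ∈ t := by
        by_contra hh
        exact hl (List.nodup_cons.mpr ⟨hh, hnt⟩)
      have hperm : t.Perm (h :: t.erase h) := List.perm_cons_erase hht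
      rcases wl_perm e hperm with h' | h'
      · rw [wl_cons, h', wl_cons, ← mul_assoc, ExteriorAlgebra.ι_sq_zero, zero_mul]
      · rw [wl_cons, h', wl_cons, mul_neg, ← mul_assoc, ExteriorAlgebra.ι_sq_zero, zero_mul,
          neg_zero]
    · rw [wl_cons, ih hnt, mul_zero]

lemma wl_mem (l : List (Fin n)) : wl e l ∈ (⋀[ℝ]^(l.length) V) := by
  induction l with
  | nil =>
    show (1 : ExteriorAlgebra ℝ V) ∈
      (LinearMap.range (ExteriorAlgebra.ι ℝ : V →ₗ[ℝ] ExteriorAlgebra ℝ V)) ^ (0 : ℕ)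
    rw [pow_zero]
    exact Submodule.one_le.mp le_rfl
  | cons h t ih =>
    rw [wl_cons]
    show _ ∈ (LinearMap.range (ExteriorAlgebra.ι ℝ : V →ₗ[ℝ] ExteriorAlgebra ℝ V)) ^ (t.length + 1)
    rw [pow_succ']
    exact Submodule.mul_mem_mul ⟨e h, rfl⟩ ih


open Finset in
/-- candidate basis vectors of the m-th exterior power -/
noncomputable def W (m : ℕ) (s : {s : Finset (Fin n) // s.card = m}) : ExteriorAlgebra ℝ V :=
  wl e (s.1.sort (· ≤ ·))

lemma W_mem (m : ℕ) (s : {s : Finset (Fin n) // s.card = m}) : W e m s ∈ (⋀[ℝ]^m V) := by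
  have h := wl_mem e (s.1.sort (· ≤ ·))
  rwa [Finset.length_sort, s.2] at h

include he in
lemma K_W (m : ℕ) (s : {s : Finset (Fin n) // s.card = m}) (i : Fin n) :
    K (e i) (W e m s) = (if i ∈ s.1 then (1:ℝ) else -1) • W e m s := by
  have h := K_wl e he (s.1.sort_nodup (· ≤ ·)) i
  simp only [Finset.mem_sort] at h
  exact h

include he in
lemma W_li (m : ℕ) : LinearIndependent ℝ (W e m) := by
  classical
  rw [Fintype.linearIndependent_iff]
  intro g hg s
  have key : ∀ t : {s : Finset (Fin n) // s.card = m},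
      Dl e (s.1.sort (· ≤ ·)) (W e m t) = if t = s then 1 else 0 := by
    intro t
    by_cases hts : t = s
    · subst hts
      rw [if_pos rfl]
      exact Dl_wl_self e he (t.1.sort_nodup _)
    · rw [if_neg hts]
      refine Dl_wl_ne e he _ _ (s.1.sort_nodup _) (t.1.sort_nodup _) ?_ ?_
      · rw [Finset.length_sort, Finset.length_sort, s.2, t.2]
      · rw [Finset.sort_toFinset, Finset.sort_toFinset]
        exact fun hEq => hts (Subtype.ext hEq.symm)
  have h0 : Dl e (s.1.sort (· ≤ ·)) (∑ t, g t • W e m t) = 0 := by rw [hg, map_zero]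
  rw [map_sum] at h0
  simp only [map_smul, key] at h0
  simp only [smul_ite, smul_zero, Finset.sum_ite_eq', Finset.mem_univ, if_true] at h0
  have h1 : g s • (1 : ExteriorAlgebra ℝ V) = 0 := h0
  have h2 : algebraMap ℝ (ExteriorAlgebra ℝ V) (g s) = 0 := by
    rwa [Algebra.algebraMap_eq_smul_one]
  rwa [ExteriorAlgebra.algebraMap_eq_zero_iff] at h2

omit he in
lemma span_W (m : ℕ) (hsp : ⊤ ≤ Submodule.span ℝ (Set.range e)) :
    Submodule.span ℝ (Set.range (W e m)) = (⋀[ℝ]^m V) := by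
  classical
  apply le_antisymm
  · rw [Submodule.span_le]
    rintro _ ⟨s, rfl⟩
    exact W_mem e m s
  · -- range ι = span of the images of basis vectors
    have hr : LinearMap.range (ExteriorAlgebra.ι ℝ : V →ₗ[ℝ] ExteriorAlgebra ℝ V)
        = Submodule.span ℝ (Set.range fun k => ExteriorAlgebra.ι ℝ (e k)) := by
      have htop : Submodule.span ℝ (Set.range e) = ⊤ := eq_top_iff.mpr hsp
      rw [LinearMap.range_eq_map, ← htop, Submodule.map_span, ← Set.range_comp]
      rfl
    show (LinearMap.range (ExteriorAlgebra.ι ℝ : V →ₗ[ℝ] ExteriorAlgebra ℝ V)) ^ m ≤ _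
    rw [hr, Submodule.span_pow, Submodule.span_le]
    intro x hx
    obtain ⟨f, rfl⟩ := Set.mem_pow.mp hx
    have hp : ∀ k : Fin m, ∃ p : Fin n, ExteriorAlgebra.ι ℝ (e p) = (f k : ExteriorAlgebra ℝ V) :=
      fun k => (f k).2
    choose p hp using hp
    have hwl : (List.ofFn fun k => (f k : ExteriorAlgebra ℝ V)).prod = wl e (List.ofFn p) := by
      rw [wl, List.map_ofFn]
      exact congrArg List.prod (congrArg List.ofFn (funext fun k => (hp k).symm))
    rw [hwl]
    by_cases hnd : (List.ofFn p).Nodup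
    · have hcard : (List.ofFn p).toFinset.card = m := by
        rw [List.toFinset_card_of_nodup hnd, List.length_ofFn]
      have hperm : (List.ofFn p).Perm ((List.ofFn p).toFinset.sort (· ≤ ·)) :=
        List.perm_of_nodup_nodup_toFinset_eq hnd (Finset.sort_nodup _ _)
          (by rw [Finset.sort_toFinset])
      rcases wl_perm e hperm with h' | h'
      · rw [h']
        exact Submodule.subset_span ⟨⟨(List.ofFn p).toFinset, hcard⟩, rfl⟩
      · rw [h']
        exact Submodule.neg_mem _ (Submodule.subset_span ⟨⟨(List.ofFn p).toFinset, hcard⟩, rfl⟩)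
    · rw [wl_eq_zero e hnd]
      exact Submodule.zero_mem _


lemma choose_arith (N m : ℕ) :
    ((N+2).choose m : ℝ) - 4*((N+1).choose m) + 4*(N.choose m)
      = (if 2 ≤ m then (N.choose (m-2) : ℝ) else 0) + (N.choose m : ℝ)
        - 2*(if 1 ≤ m then (N.choose (m-1) : ℝ) else 0) := by
  match m with
  | 0 => norm_num
  | 1 => simp [Nat.choose_one_right]; ring
  | (k+2) =>
    have h2 : 2 ≤ k + 2 := by omega
    have h1 : 1 ≤ k + 2 := by omega
    rw [if_pos h2, if_pos h1]
    simp only [Nat.add_sub_cancel, show k + 2 - 1 = k + 1 from rfl,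
      Nat.choose_succ_succ (N+1) (k+1), Nat.choose_succ_succ N k, Nat.choose_succ_succ N (k+1)]
    push_cast
    ring

lemma count_sum {n : ℕ} (m : ℕ) (i j : Fin n) (hij : i ≠ j) :
    ∑ s ∈ Finset.powersetCard m (Finset.univ : Finset (Fin n)),
        ((if i ∈ s then (1:ℝ) else -1) * (if j ∈ s then 1 else -1))
      = (n.choose m : ℝ) - 4 * ((n-1).choose m) + 4 * ((n-2).choose m) := by
  classical
  have key : ∀ s : Finset (Fin n),
      ((if i ∈ s then (1:ℝ) else -1) * (if j ∈ s then 1 else -1))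
        = 1 - 2*(if i ∉ s then (1:ℝ) else 0) - 2*(if j ∉ s then (1:ℝ) else 0)
          + 4*(if i ∉ s ∧ j ∉ s then (1:ℝ) else 0) := by
    intro s
    by_cases h1 : i ∈ s <;> by_cases h2 : j ∈ s <;> simp [h1, h2] <;> norm_num
  simp_rw [key]
  rw [Finset.sum_add_distrib, Finset.sum_sub_distrib, Finset.sum_sub_distrib,
    ← Finset.mul_sum, ← Finset.mul_sum, ← Finset.mul_sum]
  have e1 : ∑ s ∈ Finset.powersetCard m (Finset.univ : Finset (Fin n)), (1:ℝ)
      = (n.choose m : ℝ) := by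
    rw [Finset.sum_const, Finset.card_powersetCard, Finset.card_univ, Fintype.card_fin,
      nsmul_eq_mul, mul_one]
  have filt : ∀ k : Fin n,
      (Finset.powersetCard m (Finset.univ : Finset (Fin n))).filter (fun s => k ∉ s)
        = Finset.powersetCard m (Finset.univ.erase k) := by
    intro k
    ext s
    simp only [Finset.mem_filter, Finset.mem_powersetCard, Finset.subset_erase,
      Finset.subset_univ, true_and]
    tauto
  have e2 : ∀ k : Fin n, ∑ s ∈ Finset.powersetCard m (Finset.univ : Finset (Fin n)),
      (if k ∉ s then (1:ℝ) else 0) = ((n-1).choose m : ℝ) := by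
    intro k
    rw [Finset.sum_boole, filt k, Finset.card_powersetCard, Finset.card_erase_of_mem
      (Finset.mem_univ k), Finset.card_univ, Fintype.card_fin]
  have filt2 : (Finset.powersetCard m (Finset.univ : Finset (Fin n))).filter
        (fun s => i ∉ s ∧ j ∉ s)
      = Finset.powersetCard m ((Finset.univ.erase i).erase j) := by
    ext s
    simp only [Finset.mem_filter, Finset.mem_powersetCard, Finset.subset_erase,
      Finset.subset_univ, true_and]
    tauto
  have e3 : ∑ s ∈ Finset.powersetCard m (Finset.univ : Finset (Fin n)),
      (if i ∉ s ∧ j ∉ s then (1:ℝ) else 0) = ((n-2).choose m : ℝ) := by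
    rw [Finset.sum_boole, filt2, Finset.card_powersetCard, Finset.card_erase_of_mem
      (Finset.mem_erase.mpr ⟨hij.symm, Finset.mem_univ j⟩), Finset.card_erase_of_mem
      (Finset.mem_univ i), Finset.card_univ, Fintype.card_fin, Nat.sub_sub]
  rw [e1, e2 i, e2 j, e3]
  ring

end Stmt8Aux

open Stmt8Aux

/-- For an orthonormal basis `{e₁,…,eₙ}` (`n ≥ 2`) and `i ≠ j`, the trace of
`(ε(eᵢ)ι(eᵢ) - ι(eᵢ)ε(eᵢ))·(ε(eⱼ)ι(eⱼ) - ι(eⱼ)ε(eⱼ))` on the degree-`m` part `Λᵐ(V)`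
equals `C(n-2, m-2) + C(n-2, m) - 2·C(n-2, m-1)` (binomial coefficient, `0` out of range). -/
theorem stmt_8 [FiniteDimensional ℝ V] {n : ℕ} (hn : 2 ≤ n)
    (b : OrthonormalBasis (Fin n) ℝ V) (i j : Fin n) (hij : i ≠ j) (m : ℕ)
    (hmap : ∀ x ∈ (⋀[ℝ]^m V : Submodule ℝ (ExteriorAlgebra ℝ V)),
      (K (b i) * K (b j)) x ∈ (⋀[ℝ]^m V : Submodule ℝ (ExteriorAlgebra ℝ V))) :
    LinearMap.trace ℝ (⋀[ℝ]^m V : Submodule ℝ (ExteriorAlgebra ℝ V))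
        ((K (b i) * K (b j)).restrict hmap) =
      (if 2 ≤ m then ((n - 2).choose (m - 2) : ℝ) else 0) + ((n - 2).choose m : ℝ)
        - 2 * (if 1 ≤ m then ((n - 2).choose (m - 1) : ℝ) else 0) := by
  classical
  set e : Fin n → V := ⇑b with he_def
  have he : Orthonormal ℝ e := b.orthonormal
  have hsp : ⊤ ≤ Submodule.span ℝ (Set.range e) := by
    rw [he_def, ← OrthonormalBasis.coe_toBasis]
    exact (b.toBasis.span_eq).ge
  -- the basis of the m-th exterior power
  let B : Module.Basis {s : Finset (Fin n) // s.card = m} ℝ (⋀[ℝ]^m V : Submodule ℝ _) :=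
    (Module.Basis.span (W_li e he m)).map (LinearEquiv.ofEq _ _ (by rw [span_W e m hsp]))
  have hB : ∀ s, (B s : ExteriorAlgebra ℝ V) = W e m s := by
    intro s
    simp only [B, Module.Basis.map_apply]
    rw [LinearEquiv.coe_ofEq_apply]
    exact congrArg Subtype.val (Module.Basis.span_apply (W_li e he m) s)
  -- eigenvalue function
  set ε : {s : Finset (Fin n) // s.card = m} → ℝ :=
    fun s => (if i ∈ s.1 then (1:ℝ) else -1) * (if j ∈ s.1 then 1 else -1) with hε
  have hT : ∀ s, ((K (b i) * K (b j)).restrict hmap) (B s) = ε s • B s := by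
    intro s
    rw [Subtype.ext_iff, LinearMap.restrict_coe_apply]
    have : (K (b i) * K (b j)) (B s : ExteriorAlgebra ℝ V) = ε s • (B s : ExteriorAlgebra ℝ V) := by
      rw [hB, Module.End.mul_apply]
      have hbj : (b j : V) = e j := rfl
      have hbi : (b i : V) = e i := rfl
      rw [hbj, hbi, K_W e he m s j, map_smul, K_W e he m s i, smul_smul, mul_comm]
    rw [this]
    simp
  rw [LinearMap.trace_eq_matrix_trace ℝ B, Matrix.trace]
  have hdiag : ∀ s, (LinearMap.toMatrix B B ((K (b i) * K (b j)).restrict hmap)).diag s = ε s := by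
    intro s
    rw [Matrix.diag_apply, LinearMap.toMatrix_apply, hT, map_smul, Module.Basis.repr_self]
    simp
  rw [Finset.sum_congr rfl fun s _ => hdiag s]
  -- sum over subtype = sum over powersetCard
  have hsum : ∑ s : {s : Finset (Fin n) // s.card = m}, ε s
      = ∑ s ∈ Finset.powersetCard m (Finset.univ : Finset (Fin n)),
          ((if i ∈ s then (1:ℝ) else -1) * (if j ∈ s then 1 else -1)) := by
    rw [← Finset.sum_subtype (Finset.powersetCard m Finset.univ)
      (fun s => by simp [Finset.mem_powersetCard])
      (fun s => (if i ∈ s then (1:ℝ) else -1) * (if j ∈ s then 1 else -1))]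
  rw [hsum, count_sum m i j hij]
  obtain ⟨N, rfl⟩ : ∃ N, n = N + 2 := ⟨n - 2, by omega⟩
  have h1 : N + 2 - 1 = N + 1 := rfl
  have h2 : N + 2 - 2 = N := rfl
  rw [h1, h2, choose_arith N m]
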